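/- Let k, l ≥ 1 be integers and define a map R on pairs of integers (i,j) with 0 ≤ i ≤ k, 0 ≤ j ≤ l by: R(i,j) = (i, j) if i+j ≤ min(k,l); R(i,j) = (2i+j−k, k−i) if k ≤ i+j ≤ l; R(i,j) = (l−j, i+2j−l) if l ≤ i+j ≤ k; R(i,j) = (l−k+i, j+k−l) if i+j ≥ max(k,l). Then: (1) wherever two cases both apply they give the same value, so R is well defined; (2) R(i,j) = (i',j') satisfies 0 ≤ i' ≤ l, 0 ≤ j' ≤ k, and i' + j' = i + j; (3) R is a bijection from {0,…,k}×{0,…,l} onto {0,…,l}×{0,…,k}, whose inverse is the analogous map with the roles of k and l interchanged. -/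
import Mathlib


namespace Stmt10

/-- The index set `{0,…,k} × {0,…,l}` of the crystal `B^{(k)} ⊗ B^{(l)}`. -/
def dom (k l : ℤ) : Set (ℤ × ℤ) := {x | 0 ≤ x.1 ∧ x.1 ≤ k ∧ 0 ≤ x.2 ∧ x.2 ≤ l}

/-- The (graph of the) normalised combinatorial `R`-matrix
`B^{(k)} ⊗ B^{(l)} → B^{(l)} ⊗ B^{(k)}`, given case by case. -/
def Rrel (k l : ℤ) (x y : ℤ × ℤ) : Prop :=
  (x.1 + x.2 ≤ min k l ∧ y = x) ∨
  (k ≤ x.1 + x.2 ∧ x.1 + x.2 ≤ l ∧ y = (2 * x.1 + x.2 - k, k - x.1)) ∨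
  (l ≤ x.1 + x.2 ∧ x.1 + x.2 ≤ k ∧ y = (l - x.2, x.1 + 2 * x.2 - l)) ∨
  (max k l ≤ x.1 + x.2 ∧ y = (l - k + x.1, x.2 + k - l))

set_option maxHeartbeats 1000000 in
theorem stmt10 (k l : ℤ) (hk : 1 ≤ k) (hl : 1 ≤ l) :
    -- (1) wherever two cases both apply they agree, so `R` is a well-defined map on `dom k l`
    (∀ x ∈ dom k l, ∃! y : ℤ × ℤ, Rrel k l x y) ∧
    -- (2) the image lies in `dom l k` and `i' + j' = i + j`
    (∀ x ∈ dom k l, ∀ y : ℤ × ℤ, Rrel k l x y →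
      y ∈ dom l k ∧ y.1 + y.2 = x.1 + x.2) ∧
    -- (3) `R` is a bijection of `dom k l` onto `dom l k`, with inverse the analogous map
    -- with the roles of `k` and `l` interchanged
    (∀ x ∈ dom k l, ∀ y ∈ dom l k, (Rrel k l x y ↔ Rrel l k y x)) := by
  refine ⟨?_, ?_, ?_⟩
  · rintro ⟨i, j⟩ ⟨h0, h1, h2, h3⟩
    refine ⟨(i + max 0 (i + j - k) - max 0 (i + j - l),
             j - max 0 (i + j - k) + max 0 (i + j - l)), ?_, ?_⟩
    · simp only [Rrel, Prod.ext_iff]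
      omega
    · rintro ⟨a, b⟩ h
      simp only [Rrel, Prod.ext_iff] at h ⊢
      omega
  · rintro ⟨i, j⟩ ⟨h0, h1, h2, h3⟩ ⟨a, b⟩ h
    simp only [Rrel, Prod.ext_iff] at h
    refine ⟨?_, ?_⟩
    · simp only [dom, Set.mem_setOf_eq]
      omega
    · omega
  · rintro ⟨i, j⟩ ⟨h0, h1, h2, h3⟩ ⟨a, b⟩ ⟨g0, g1, g2, g3⟩
    simp only [Rrel, Prod.ext_iff]
    constructor <;> rintro (h | h | h | h) <;> omega

end Stmt10
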